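/- Let J : ℝ^N → ℝ be a finite-valued convex function, Φ : ℝ^N → ℝ^P linear, and x₀ ∈ ℝ^N with Im(Φ^*) ∩ ∂J(x₀) ≠ ∅ and ker(Φ) ∩ T_{x₀} = {0}. Then: (i) all elements of ∂J(x₀) have the same orthogonal projection e_{x₀} onto T_{x₀}, and aff(∂J(x₀)) = e_{x₀} + T_{x₀}^⊥; (ii) the set {p ∈ ℝ^P : Φ^*p ∈ aff(∂J(x₀))} is a nonempty affine subspace, and its unique minimal-Euclidean-norm element p_F is the unique vector p belonging to the range of Φ∘proj_{T_{x₀}} that satisfies proj_{T_{x₀}}(Φ^*p) = e_{x₀}. -/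

import Mathlib

open Matrix

/-- Euclidean dot product on `ℝ^n`. -/
noncomputable def dotp {n : ℕ} (u v : Fin n → ℝ) : ℝ := ∑ i, u i * v i

/-- Euclidean (ℓ²) norm on `ℝ^n`. -/
noncomputable def nrm2 {n : ℕ} (u : Fin n → ℝ) : ℝ := Real.sqrt (∑ i, (u i) ^ 2)

/-- ℓ¹ norm on `ℝ^n`. -/
noncomputable def l1norm {n : ℕ} (u : Fin n → ℝ) : ℝ := ∑ i, |u i|

/-- ℓ^∞ norm of a finitely indexed real vector. -/
noncomputable def linf {ι : Type*} [Fintype ι] (u : ι → ℝ) : ℝ := ⨆ i, |u i|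

/-- The sign function: 1 for positive, -1 for negative, 0 at 0. -/
noncomputable def sgn (t : ℝ) : ℝ := if 0 < t then 1 else if t < 0 then -1 else 0

/-- Subdifferential of a finite-valued function `J : ℝ^n → ℝ` at `x`:
`∂J(x) = {η : J(x+δ) ≥ J(x) + ⟨η,δ⟩ for all δ}`. -/
def subdiff {n : ℕ} (J : (Fin n → ℝ) → ℝ) (x : Fin n → ℝ) : Set (Fin n → ℝ) :=
  {η | ∀ δ, J x + dotp η δ ≤ J (x + δ)}

/-- The model tangent subspace `T_x = Lin(∂J(x))^⊥`, where `Lin(E)` is the linear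
space parallel to the affine hull of `E`. -/
def modelT {n : ℕ} (J : (Fin n → ℝ) → ℝ) (x : Fin n → ℝ) : Set (Fin n → ℝ) :=
  {u | ∀ v ∈ (affineSpan ℝ (subdiff J x)).direction, dotp u v = 0}

open scoped RealInnerProductSpace

lemma dotp_eq_inner {n : ℕ} (u v : EuclideanSpace ℝ (Fin n)) :
    dotp u v = ⟪u, v⟫ := by
  simp [dotp, PiLp.inner_apply, RCLike.inner_apply, starRingEnd_apply, mul_comm]

lemma nrm2_eq_norm {n : ℕ} (u : EuclideanSpace ℝ (Fin n)) :
    nrm2 u = ‖u‖ := by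
  rw [EuclideanSpace.norm_eq]
  simp [nrm2, Real.norm_eq_abs, sq_abs]

noncomputable def mLin {m n : ℕ} (M : Matrix (Fin m) (Fin n) ℝ) :
    EuclideanSpace ℝ (Fin n) →ₗ[ℝ] EuclideanSpace ℝ (Fin m) where
  toFun v := WithLp.toLp 2 (M.mulVec v)
  map_add' x y := congrArg (WithLp.toLp 2) (M.mulVec_add x y)
  map_smul' c x := congrArg (WithLp.toLp 2) (M.mulVec_smul c x)

lemma adj {N P : ℕ} (Φ : Matrix (Fin P) (Fin N) ℝ)
    (p : EuclideanSpace ℝ (Fin P)) (x : EuclideanSpace ℝ (Fin N)) :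
    ⟪mLin Φᵀ p, x⟫ = ⟪p, mLin Φ x⟫ := by
  rw [← dotp_eq_inner, ← dotp_eq_inner]
  show dotProduct (Φᵀ.mulVec p.ofLp) x.ofLp = dotProduct p.ofLp (Φ.mulVec x.ofLp)
  rw [Matrix.mulVec_transpose, ← Matrix.dotProduct_mulVec]


set_option maxHeartbeats 1000000 in
/-- (i) all elements of `∂J(x₀)` have the same orthogonal projection
`e_{x₀}` onto `T_{x₀}` (the projection `π` onto `T_{x₀}` being characterized by
membership and orthogonality of the residual), and
`aff(∂J(x₀)) = e_{x₀} + T_{x₀}^⊥`; (ii) the set `{p : Φ^*p ∈ aff(∂J(x₀))}` is a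
nonempty affine subspace whose unique minimal-Euclidean-norm element `p_F` is the
unique vector `p` in the range of `Φ ∘ proj_{T_{x₀}}` satisfying
`proj_{T_{x₀}}(Φ^*p) = e_{x₀}`. -/
theorem stmt8 {N P : ℕ} (J : (Fin N → ℝ) → ℝ) (hJ : ConvexOn ℝ Set.univ J)
    (Φ : Matrix (Fin P) (Fin N) ℝ) (x₀ : Fin N → ℝ)
    (hD : ({η : Fin N → ℝ | ∃ p : Fin P → ℝ, η = Φᵀ.mulVec p} ∩ subdiff J x₀).Nonempty)
    (hker : {x : Fin N → ℝ | Φ.mulVec x = 0} ∩ modelT J x₀ = {0}) :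
    ∃ π : (Fin N → ℝ) → (Fin N → ℝ),
      (∀ v, π v ∈ modelT J x₀ ∧ ∀ u ∈ modelT J x₀, dotp (v - π v) u = 0) ∧
      ∃ e : Fin N → ℝ,
        (∀ η ∈ subdiff J x₀, π η = e) ∧
        ((affineSpan ℝ (subdiff J x₀) : Set (Fin N → ℝ)) =
          {z | ∃ v, (∀ u ∈ modelT J x₀, dotp v u = 0) ∧ z = e + v}) ∧
        {p : Fin P → ℝ | Φᵀ.mulVec p ∈ affineSpan ℝ (subdiff J x₀)}.Nonempty ∧
        (∃ A : AffineSubspace ℝ (Fin P → ℝ),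
          (A : Set (Fin P → ℝ)) = {p | Φᵀ.mulVec p ∈ affineSpan ℝ (subdiff J x₀)}) ∧
        ∃ pF ∈ {p : Fin P → ℝ | Φᵀ.mulVec p ∈ affineSpan ℝ (subdiff J x₀)},
          (∀ q ∈ {p : Fin P → ℝ | Φᵀ.mulVec p ∈ affineSpan ℝ (subdiff J x₀)},
            q ≠ pF → nrm2 pF < nrm2 q) ∧
          (∃ x : Fin N → ℝ, pF = Φ.mulVec (π x)) ∧ π (Φᵀ.mulVec pF) = e ∧
          ∀ p : Fin P → ℝ, (∃ x, p = Φ.mulVec (π x)) → π (Φᵀ.mulVec p) = e → p = pF := by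
  classical
  obtain ⟨η₀, ⟨p₀, hp₀⟩, hη₀S⟩ := hD
  let η₀E : EuclideanSpace ℝ (Fin N) := WithLp.toLp 2 η₀
  let p₀F : EuclideanSpace ℝ (Fin P) := WithLp.toLp 2 p₀
  set Apan := affineSpan ℝ (subdiff J x₀) with hApan
  have hη₀span : η₀ ∈ Apan := subset_affineSpan ℝ _ hη₀S
  set D : Submodule ℝ (EuclideanSpace ℝ (Fin N)) :=
    (Apan.direction).comap (WithLp.linearEquiv 2 ℝ (Fin N → ℝ)).toLinearMap with hDdef
  have hD_mem : ∀ x : EuclideanSpace ℝ (Fin N),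
      x ∈ D ↔ (x : Fin N → ℝ) ∈ Apan.direction := fun x => Iff.rfl
  set T : Submodule ℝ (EuclideanSpace ℝ (Fin N)) := Dᗮ with hTdef
  have hTbot : Tᗮ = D := Submodule.orthogonal_orthogonal D
  have hT_mem : ∀ u : EuclideanSpace ℝ (Fin N), u ∈ T ↔ (u : Fin N → ℝ) ∈ modelT J x₀ := by
    intro u
    rw [hTdef, Submodule.mem_orthogonal]
    constructor
    · intro h v hv
      rw [show v = (WithLp.toLp 2 v).ofLp from rfl, dotp_eq_inner, real_inner_comm]
      exact h _ ((hD_mem _).mpr hv)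
    · intro h v hv
      rw [real_inner_comm, ← dotp_eq_inner]
      exact h v ((hD_mem v).mp hv)
  set πE : EuclideanSpace ℝ (Fin N) → EuclideanSpace ℝ (Fin N) :=
    fun v => ((T.orthogonalProjectionOnto v : T) : EuclideanSpace ℝ (Fin N)) with hπdef
  have hπmem : ∀ v : EuclideanSpace ℝ (Fin N), πE v ∈ T :=
    fun v => (T.orthogonalProjectionOnto v).2
  have hπsub : ∀ v : EuclideanSpace ℝ (Fin N), v - πE v ∈ D := by
    intro v
    rw [← hTbot]
    exact Submodule.sub_starProjection_mem_orthogonal v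
  have hπlin : ∀ a b : EuclideanSpace ℝ (Fin N), πE (a - b) = πE a - πE b := by
    intro a b
    show ((T.orthogonalProjectionOnto (a - b) : T) : EuclideanSpace ℝ (Fin N)) = _
    rw [map_sub]
    rfl
  have hπzero : ∀ w : EuclideanSpace ℝ (Fin N), πE w = 0 → w ∈ D := by
    intro w hw
    have h := hπsub w
    rwa [hw, sub_zero] at h
  have hπD : ∀ w : EuclideanSpace ℝ (Fin N), w ∈ D → πE w = 0 := by
    intro w hw
    have hw' : w ∈ Tᗮ := by rw [hTbot]; exact hw
    have h0 : T.orthogonalProjectionOnto w = 0 :=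
      Submodule.orthogonalProjectionOnto_apply_of_mem_orthogonal hw'
    show ((T.orthogonalProjectionOnto w : T) : EuclideanSpace ℝ (Fin N)) = 0
    rw [h0]
    rfl
  set e : EuclideanSpace ℝ (Fin N) := πE η₀E with hedef
  have hmemA : ∀ z : EuclideanSpace ℝ (Fin N), (z : Fin N → ℝ) ∈ Apan ↔ (z - η₀E ∈ D) := by
    intro z
    rw [hD_mem, WithLp.ofLp_sub]
    exact (AffineSubspace.vsub_right_mem_direction_iff_mem hη₀span z).symm
  have hπe : ∀ z : EuclideanSpace ℝ (Fin N), z - η₀E ∈ D → πE z = e := by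
    intro z hz
    have h1 : πE z - e = πE (z - η₀E) := (hπlin z η₀E).symm
    have h2 : πE (z - η₀E) = 0 := hπD _ hz
    exact sub_eq_zero.mp (h1.trans h2)
  set V : Submodule ℝ (EuclideanSpace ℝ (Fin P)) := D.comap (mLin Φᵀ) with hVdef
  set W : Submodule ℝ (EuclideanSpace ℝ (Fin P)) := T.map (mLin Φ) with hWdef
  have hWV : Wᗮ = V := by
    ext p
    rw [Submodule.mem_orthogonal, hVdef, Submodule.mem_comap, ← hTbot,
      Submodule.mem_orthogonal']
    constructor
    · intro h t ht
      rw [adj, real_inner_comm]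
      exact h (mLin Φ t) ⟨t, ht, rfl⟩
    · intro hp q hq
      obtain ⟨t, ht, rfl⟩ := hq
      rw [real_inner_comm, ← adj]
      exact hp t ht
  have hVW : Vᗮ = W := by rw [← hWV, Submodule.orthogonal_orthogonal]
  set pF : EuclideanSpace ℝ (Fin P) :=
    p₀F - ((V.orthogonalProjectionOnto p₀F : V) : EuclideanSpace ℝ (Fin P)) with hpFdef
  have hpFW : pF ∈ W := by
    rw [← hVW]
    exact Submodule.sub_starProjection_mem_orthogonal p₀F
  have hLp₀ : mLin Φᵀ p₀F = η₀E := by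
    show WithLp.toLp 2 (Φᵀ.mulVec p₀) = WithLp.toLp 2 η₀
    rw [hp₀]
  have hpFC : mLin Φᵀ pF - η₀E ∈ D := by
    have hv₀V : ((V.orthogonalProjectionOnto p₀F : V) : EuclideanSpace ℝ (Fin P)) ∈ V :=
      (V.orthogonalProjectionOnto p₀F).2
    have h1 : mLin Φᵀ pF - η₀E
        = -(mLin Φᵀ ((V.orthogonalProjectionOnto p₀F : V) : EuclideanSpace ℝ (Fin P))) := by
      rw [hpFdef, map_sub, hLp₀]
      abel
    rw [h1]
    exact neg_mem hv₀V
  have hDT' : ∀ v : EuclideanSpace ℝ (Fin N),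
      (∀ u ∈ modelT J x₀, dotp v u = 0) ↔ v ∈ D := by
    intro v
    rw [← hTbot, Submodule.mem_orthogonal]
    constructor
    · intro h u hu
      rw [real_inner_comm, ← dotp_eq_inner]
      exact h u ((hT_mem u).mp hu)
    · intro h u hu
      rw [show u = (WithLp.toLp 2 u).ofLp from rfl, dotp_eq_inner, real_inner_comm]
      exact h _ ((hT_mem _).mpr hu)
  have hpFmem : Φᵀ.mulVec pF.ofLp ∈ Apan := (hmemA (mLin Φᵀ pF)).mpr hpFC
  let π0 : (Fin N → ℝ) → (Fin N → ℝ) := fun v => (πE (WithLp.toLp 2 v)).ofLp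
  have hπeF : π0 (Φᵀ.mulVec pF.ofLp) = e.ofLp := congrArg WithLp.ofLp (hπe _ hpFC)
  refine ⟨π0, ?_, e.ofLp, ?_, ?_, ⟨p₀, ?_⟩, ?_, pF.ofLp, hpFmem, ?_, ?_, hπeF, ?_⟩
  · intro v
    refine ⟨(hT_mem _).mp (hπmem (WithLp.toLp 2 v)), fun u hu => ?_⟩
    have h := Submodule.starProjection_inner_eq_zero (K := T) (WithLp.toLp 2 v)
      (WithLp.toLp 2 u) ((hT_mem _).mpr hu)
    rw [← dotp_eq_inner] at h
    exact h
  · intro η hη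
    exact congrArg WithLp.ofLp (hπe (WithLp.toLp 2 η) ((hmemA _).mp (subset_affineSpan ℝ _ hη)))
  · ext z
    simp only [Set.mem_setOf_eq]
    constructor
    · intro hz
      let zE : EuclideanSpace ℝ (Fin N) := WithLp.toLp 2 z
      refine ⟨(zE - e).ofLp, (hDT' _).mpr ?_, ?_⟩
      · have h1 : zE - η₀E ∈ D := (hmemA zE).mp hz
        have h2 : η₀E - e ∈ D := hπsub η₀E
        have h3 : zE - e = (zE - η₀E) + (η₀E - e) := by abel
        rw [h3]
        exact add_mem h1 h2
      · have h : e + (zE - e) = zE := by abel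
        exact (congrArg WithLp.ofLp h).symm
    · rintro ⟨v, hv, rfl⟩
      let vE : EuclideanSpace ℝ (Fin N) := WithLp.toLp 2 v
      have hv' : vE ∈ D := (hDT' vE).mp hv
      have h2 : η₀E - e ∈ D := hπsub η₀E
      have h3 : (e + vE) - η₀E = vE - (η₀E - e) := by abel
      have h4 : (e + vE) - η₀E ∈ D := by rw [h3]; exact sub_mem hv' h2
      exact (hmemA (e + vE)).mpr h4
  · show Φᵀ.mulVec p₀ ∈ Apan
    rw [← hp₀]
    exact hη₀span
  · refine ⟨Apan.comap (Matrix.mulVecLin Φᵀ).toAffineMap, ?_⟩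
    ext p
    simp [AffineSubspace.mem_comap, Matrix.mulVecLin_apply, Matrix.mulVec_transpose]
  · -- minimality
    intro q hq hqne
    let qF : EuclideanSpace ℝ (Fin P) := WithLp.toLp 2 q
    have hqC : mLin Φᵀ qF - η₀E ∈ D := (hmemA (mLin Φᵀ qF)).mp hq
    have hqV : qF - pF ∈ V := by
      rw [hVdef, Submodule.mem_comap]
      show mLin Φᵀ (qF - pF) ∈ D
      rw [map_sub]
      have h3 : mLin Φᵀ qF - mLin Φᵀ pF
          = (mLin Φᵀ qF - η₀E) - (mLin Φᵀ pF - η₀E) := by abel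
      rw [h3]
      exact sub_mem hqC hpFC
    have horth : ⟪pF, qF - pF⟫ = 0 := by
      rw [real_inner_comm]
      rw [← hVW, Submodule.mem_orthogonal] at hpFW
      exact hpFW _ hqV
    have hq' : qF = pF + (qF - pF) := by abel
    have hnorm : ‖qF‖ ^ 2 = ‖pF‖ ^ 2 + ‖qF - pF‖ ^ 2 := by
      conv_lhs => rw [hq']
      rw [norm_add_sq_real, horth]
      ring
    have hne : qF - pF ≠ 0 := sub_ne_zero.mpr (fun h => hqne (congrArg WithLp.ofLp h))
    have hpos : 0 < ‖qF - pF‖ := norm_pos_iff.mpr hne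
    have hlt : ‖pF‖ ^ 2 < ‖qF‖ ^ 2 := by
      rw [hnorm]; nlinarith
    rw [nrm2_eq_norm, show q = qF.ofLp from rfl, nrm2_eq_norm]
    exact lt_of_pow_lt_pow_left₀ 2 (norm_nonneg _) hlt
  · -- pF in range of Φ ∘ π
    obtain ⟨t, ht, hLt⟩ := hpFW
    refine ⟨t.ofLp, ?_⟩
    have hπt : πE t = t := by
      show ((T.orthogonalProjectionOnto t : T) : EuclideanSpace ℝ (Fin N)) = t
      exact Submodule.starProjection_eq_self_iff.mpr ht
    show pF.ofLp = Φ.mulVec (πE t).ofLp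
    rw [hπt, ← hLt]
    rfl
  · -- uniqueness
    rintro p ⟨x, rfl⟩ hpe
    let xE : EuclideanSpace ℝ (Fin N) := WithLp.toLp 2 x
    let pG : EuclideanSpace ℝ (Fin P) := mLin Φ (πE xE)
    have hpW : pG ∈ W := ⟨πE xE, hπmem xE, rfl⟩
    have hpe' : πE (mLin Φᵀ pG) = e := congrArg (WithLp.toLp 2) hpe
    have hpC : mLin Φᵀ pG - η₀E ∈ D := by
      have h1 : πE (mLin Φᵀ pG - η₀E) = πE (mLin Φᵀ pG) - e := hπlin _ _
      have h3 : πE (mLin Φᵀ pG - η₀E) = 0 := by rw [h1, hpe', sub_self]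
      exact hπzero _ h3
    have hpv : pG - pF ∈ V := by
      rw [hVdef, Submodule.mem_comap]
      show mLin Φᵀ (pG - pF) ∈ D
      rw [map_sub]
      have h3 : mLin Φᵀ pG - mLin Φᵀ pF
          = (mLin Φᵀ pG - η₀E) - (mLin Φᵀ pF - η₀E) := by abel
      rw [h3]
      exact sub_mem hpC hpFC
    have hpw : pG - pF ∈ W := sub_mem hpW hpFW
    have h0 : pG - pF = 0 := by
      rw [← hVW, Submodule.mem_orthogonal] at hpw
      have hin := hpw _ hpv
      rwa [inner_self_eq_zero] at hin
    exact congrArg WithLp.ofLp (sub_eq_zero.mp h0)
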